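/- arXiv:2303.12928 — 5 statements merged into one kernel-verified Lean document; each statement's English description precedes it below -/
import Mathlib

section
/- For every i ∈ {1, …, N} and every s in the open interval (T_{i−1}, T_i), the closed-form matrix function P satisfies the Riccati ODE: P has derivative P′(s) = −P(s) B_i R_i^{−1} B_i^T P(s) at s; moreover P(0) = Q_f. -/
open Matrix

attribute [local instance] Matrix.linftyOpNormedRing Matrix.linftyOpNormedAlgebra

noncomputable def entryCLM (n : ℕ) (k l : Fin n) : Matrix (Fin n) (Fin n) ℝ →L[ℝ] ℝ :=
  LinearMap.toContinuousLinearMap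
    { toFun := fun A => A k l
      map_add' := fun _ _ => rfl
      map_smul' := fun _ _ => rfl }

/-- For every `i ∈ {1, …, N}` and every `s ∈ (T_{i-1}, T_i)`, the closed-form
matrix function `P` (on the `i`-th piece) satisfies the Riccati ODE
`P′(s) = -P(s) B_i R_i⁻¹ B_iᵀ P(s)` (entrywise derivative); moreover `P(0) = Q_f`
(the value of the first piece `i = 1` at `s = T_0 = 0`). -/
theorem stmt_1 (n m N : ℕ) (hn : 1 ≤ n) (hm : 1 ≤ m) (hN : 1 ≤ N)
    (t : ℕ → ℝ) (ht : ∀ i ∈ Finset.Icc 1 N, 0 < t i)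
    (B : ℕ → Matrix (Fin n) (Fin m) ℝ)
    (R : ℕ → Matrix (Fin m) (Fin m) ℝ) (hR : ∀ i ∈ Finset.Icc 1 N, (R i).PosDef)
    (a : ℕ → Fin m → ℝ)
    (Qf : Matrix (Fin n) (Fin n) ℝ) (hQf : Qf.PosDef) (b : Fin n → ℝ)
    (T : ℕ → ℝ) (hT : ∀ i, T i = ∑ j ∈ Finset.Icc 1 i, t j)
    (P : ℕ → ℝ → Matrix (Fin n) (Fin n) ℝ)
    (hP : ∀ i s, P i s
      = (Qf⁻¹ + ∑ j ∈ Finset.Icc 1 (i - 1), t j • (B j * (R j)⁻¹ * (B j)ᵀ)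
          + (s - T (i - 1)) • (B i * (R i)⁻¹ * (B i)ᵀ))⁻¹) :
    (∀ i ∈ Finset.Icc 1 N, ∀ s ∈ Set.Ioo (T (i - 1)) (T i), ∀ k l : Fin n,
        HasDerivAt (fun σ => P i σ k l)
          ((-(P i s * (B i * (R i)⁻¹ * (B i)ᵀ) * P i s)) k l) s) ∧
      P 1 0 = Qf := by
  have hsmulPSD : ∀ (A : Matrix (Fin n) (Fin n) ℝ), A.PosSemidef → ∀ c : ℝ, 0 ≤ c →
      (c • A).PosSemidef := by
    intro A hA c hc
    refine ⟨?_, fun x => ?_⟩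
    · unfold Matrix.IsHermitian
      rw [conjTranspose_smul, hA.1.eq]; simp
    · exact (hA.smul hc).2 x
  constructor
  · intro i hi s hs k l
    obtain ⟨hi1, hiN⟩ := Finset.mem_Icc.mp hi
    set W : Matrix (Fin n) (Fin n) ℝ := B i * (R i)⁻¹ * (B i)ᵀ with hW
    set A : Matrix (Fin n) (Fin n) ℝ :=
      Qf⁻¹ + ∑ j ∈ Finset.Icc 1 (i - 1), t j • (B j * (R j)⁻¹ * (B j)ᵀ) with hA
    set M : ℝ → Matrix (Fin n) (Fin n) ℝ := fun σ => A + (σ - T (i - 1)) • W with hM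
    -- PSD of W-type matrices
    have hWpsd : ∀ j ∈ Finset.Icc 1 N, (B j * (R j)⁻¹ * (B j)ᵀ).PosSemidef := by
      intro j hj
      have h1 : ((R j)⁻¹).PosSemidef := (hR j hj).inv.posSemidef
      have := h1.mul_mul_conjTranspose_same (B j)
      simpa [Matrix.conjTranspose_eq_transpose_of_trivial] using this
    have hsum : (∑ j ∈ Finset.Icc 1 (i - 1), t j • (B j * (R j)⁻¹ * (B j)ᵀ)).PosSemidef := by
      refine Finset.sum_induction _ _ (fun x y hx hy => hx.add hy) Matrix.PosSemidef.zero ?_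
      intro j hj
      obtain ⟨hj1, hj2⟩ := Finset.mem_Icc.mp hj
      have hjN : j ∈ Finset.Icc 1 N := Finset.mem_Icc.mpr ⟨hj1, hj2.trans (Nat.sub_le i 1 |>.trans hiN)⟩
      exact hsmulPSD _ (hWpsd j hjN) _ (ht j hjN).le
    have hMpos : ∀ σ : ℝ, T (i - 1) < σ → (M σ).PosDef := by
      intro σ hσ
      have h1 : (Qf⁻¹).PosDef := hQf.inv
      have h2 : ((σ - T (i - 1)) • W).PosSemidef :=
        hsmulPSD _ (hWpsd i hi) _ (by linarith)
      exact (h1.add_posSemidef hsum).add_posSemidef h2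
    have hMs : (M s).PosDef := hMpos s hs.1
    have hMunit : IsUnit (M s) := hMs.isUnit
    -- derivative of M
    have hMderiv : HasDerivAt M W s := by
      have h0 : HasDerivAt (fun σ : ℝ => σ - T (i - 1)) 1 s := (hasDerivAt_id s).sub_const _
      have h1 : HasDerivAt (fun σ : ℝ => (σ - T (i - 1)) • W) ((1 : ℝ) • W) s := h0.smul_const W
      rw [one_smul] at h1
      exact h1.const_add A
    -- derivative of inverse
    set u : (Matrix (Fin n) (Fin n) ℝ)ˣ := hMunit.unit with hu
    have hcoe : (↑u : Matrix (Fin n) (Fin n) ℝ) = M s := hMunit.unit_spec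
    have hinv : HasFDerivAt Ring.inverse
        (-ContinuousLinearMap.mulLeftRight ℝ _ ↑u⁻¹ ↑u⁻¹) ((↑u : Matrix (Fin n) (Fin n) ℝ)) :=
      hasFDerivAt_ringInverse u
    rw [hcoe] at hinv
    have hcomp : HasDerivAt (fun σ => Ring.inverse (M σ))
        ((-ContinuousLinearMap.mulLeftRight ℝ _ ↑u⁻¹ ↑u⁻¹) W) s :=
      hinv.comp_hasDerivAt s hMderiv
    have hval : ((-ContinuousLinearMap.mulLeftRight ℝ _ (↑u⁻¹ : Matrix (Fin n) (Fin n) ℝ) ↑u⁻¹) W)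
        = -((M s)⁻¹ * W * (M s)⁻¹) := by
      have : (↑u⁻¹ : Matrix (Fin n) (Fin n) ℝ) = (M s)⁻¹ := by
        rw [← hcoe, Matrix.coe_units_inv]
      simp [this]
    rw [hval] at hcomp
    have hre : (fun σ => Ring.inverse (M σ)) = fun σ => (M σ)⁻¹ := by
      funext σ; rw [Matrix.nonsing_inv_eq_ringInverse]
    rw [hre] at hcomp
    -- project to entries
    have hproj := (entryCLM n k l).hasFDerivAt.comp_hasDerivAt s hcomp
    simp only [Function.comp_def] at hproj
    have hPM : ∀ σ, P i σ = (M σ)⁻¹ := fun σ => hP i σ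
    have hgoalval : (entryCLM n k l) (-((M s)⁻¹ * W * (M s)⁻¹))
        = (-(P i s * W * P i s)) k l := by
      rw [hPM]; rfl
    erw [hgoalval] at hproj
    have : (fun σ => (entryCLM n k l) ((M σ)⁻¹)) = fun σ => P i σ k l := by
      funext σ; rw [hPM]; rfl
    rwa [this] at hproj
  · rw [hP]
    have hT0 : T 0 = 0 := by rw [hT]; simp
    simp only [Nat.sub_self, hT0, sub_zero, zero_smul, add_zero]
    rw [show Finset.Icc 1 0 = (∅ : Finset ℕ) by simp, Finset.sum_empty, add_zero]
    exact Matrix.nonsing_inv_nonsing_inv Qf (isUnit_iff_isUnit_det Qf |>.mp hQf.isUnit)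
end

section
/- For every i ∈ {1, …, N} and every s in the open interval (T_{i−1}, T_i), the closed-form vector function q satisfies the linear ODE: q has derivative q′(s) = −P(s) B_i R_i^{−1} (B_i^T q(s) − a_i) at s; moreover q(0) = b. -/
open Matrix

lemma aux_psd_smul {n : ℕ} {M : Matrix (Fin n) (Fin n) ℝ} (hM : M.PosSemidef) {t : ℝ}
    (ht : 0 ≤ t) : (t • M).PosSemidef := by
  constructor
  · unfold Matrix.IsHermitian
    rw [conjTranspose_smul, hM.1]
    simp
  · intro x
    convert mul_nonneg ht (hM.2 x) using 1
    rw [Finsupp.mul_sum]; refine Finsupp.sum_congr fun i _ => ?_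
    rw [Finsupp.mul_sum]; refine Finsupp.sum_congr fun j _ => ?_
    simp only [Matrix.smul_apply, smul_eq_mul]; ring

lemma aux_det_diff {n : ℕ} {M : ℝ → Matrix (Fin n) (Fin n) ℝ} {s : ℝ}
    (h : ∀ p r, DifferentiableAt ℝ (fun σ => M σ p r) s) :
    DifferentiableAt ℝ (fun σ => (M σ).det) s := by
  simp only [Matrix.det_apply']
  apply DifferentiableAt.fun_sum
  intro σ _
  exact (DifferentiableAt.fun_finsetProd (fun i _ => h (σ i) i)).const_mul _

/-- For every `i ∈ {1, …, N}` and every `s ∈ (T_{i-1}, T_i)`, the closed-form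
vector function `q` (on the `i`-th piece) satisfies the linear ODE
`q′(s) = -P(s) B_i R_i⁻¹ (B_iᵀ q(s) - a_i)` (entrywise derivative); moreover `q(0) = b`
(the value of the first piece `i = 1` at `s = T_0 = 0`). -/
theorem stmt_2 (n m N : ℕ) (hn : 1 ≤ n) (hm : 1 ≤ m) (hN : 1 ≤ N)
    (t : ℕ → ℝ) (ht : ∀ i ∈ Finset.Icc 1 N, 0 < t i)
    (B : ℕ → Matrix (Fin n) (Fin m) ℝ)
    (R : ℕ → Matrix (Fin m) (Fin m) ℝ) (hR : ∀ i ∈ Finset.Icc 1 N, (R i).PosDef)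
    (a : ℕ → Fin m → ℝ)
    (Qf : Matrix (Fin n) (Fin n) ℝ) (hQf : Qf.PosDef) (b : Fin n → ℝ)
    (T : ℕ → ℝ) (hT : ∀ i, T i = ∑ j ∈ Finset.Icc 1 i, t j)
    (P : ℕ → ℝ → Matrix (Fin n) (Fin n) ℝ)
    (hP : ∀ i s, P i s
      = (Qf⁻¹ + ∑ j ∈ Finset.Icc 1 (i - 1), t j • (B j * (R j)⁻¹ * (B j)ᵀ)
          + (s - T (i - 1)) • (B i * (R i)⁻¹ * (B i)ᵀ))⁻¹)
    (q : ℕ → ℝ → (Fin n → ℝ))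
    (hq : ∀ i s, q i s
      = P i s *ᵥ (Qf⁻¹ *ᵥ b + ∑ j ∈ Finset.Icc 1 (i - 1), t j • ((B j * (R j)⁻¹) *ᵥ a j)
          + (s - T (i - 1)) • ((B i * (R i)⁻¹) *ᵥ a i))) :
    (∀ i ∈ Finset.Icc 1 N, ∀ s ∈ Set.Ioo (T (i - 1)) (T i), ∀ k : Fin n,
        HasDerivAt (fun σ => q i σ k)
          ((-(P i s * (B i * (R i)⁻¹)) *ᵥ ((B i)ᵀ *ᵥ q i s - a i)) k) s) ∧
      q 1 0 = b := by
  constructor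
  · intro i hi s hs k
    obtain ⟨hi1, hiN⟩ := Finset.mem_Icc.mp hi
    set D : Matrix (Fin n) (Fin n) ℝ := B i * (R i)⁻¹ * (B i)ᵀ with hD
    set A : Matrix (Fin n) (Fin n) ℝ :=
      Qf⁻¹ + ∑ j ∈ Finset.Icc 1 (i - 1), t j • (B j * (R j)⁻¹ * (B j)ᵀ) with hA
    set c : ℝ := T (i - 1) with hc
    set w : Fin n → ℝ := (B i * (R i)⁻¹) *ᵥ a i with hw
    set u : Fin n → ℝ :=
      Qf⁻¹ *ᵥ b + ∑ j ∈ Finset.Icc 1 (i - 1), t j • ((B j * (R j)⁻¹) *ᵥ a j) with hu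
    have hcs : c < s := hs.1
    -- positive semidefiniteness facts
    have hDpsd : ∀ j ∈ Finset.Icc 1 N, (B j * (R j)⁻¹ * (B j)ᵀ).PosSemidef := by
      intro j hj
      have h1 := ((hR j hj).inv).posSemidef.mul_mul_conjTranspose_same (B j)
      rwa [conjTranspose_eq_transpose_of_trivial] at h1
    have hsum : (∑ j ∈ Finset.Icc 1 (i - 1), t j • (B j * (R j)⁻¹ * (B j)ᵀ)).PosSemidef := by
      refine Finset.sum_induction _ _ (fun x y hx hy => hx.add hy) Matrix.PosSemidef.zero ?_
      intro j hj
      have hjN : j ∈ Finset.Icc 1 N := by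
        simp only [Finset.mem_Icc] at hj ⊢; omega
      exact aux_psd_smul (hDpsd j hjN) (ht j hjN).le
    have hApos : A.PosDef := by rw [hA]; exact hQf.inv.add_posSemidef hsum
    have hDipsd : D.PosSemidef := by rw [hD]; exact hDpsd i hi
    have hMpos : ∀ σ : ℝ, c ≤ σ → (A + (σ - c) • D).PosDef := fun σ hσ =>
      hApos.add_posSemidef (aux_psd_smul hDipsd (sub_nonneg.mpr hσ))
    have hdet : ∀ σ : ℝ, c ≤ σ → IsUnit (A + (σ - c) • D).det := fun σ hσ =>
      isUnit_iff_ne_zero.mpr (hMpos σ hσ).det_pos.ne'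
    have hkey : ∀ σ : ℝ, q i σ = (A + (σ - c) • D)⁻¹ *ᵥ (u + (σ - c) • w) := by
      intro σ
      rw [hq i σ, hP i σ, hA, hD, hc, hu, hw]
    -- differentiability of the matrix entries
    have hMdiff : ∀ (p r : Fin n), DifferentiableAt ℝ (fun σ => (A + (σ - c) • D) p r) s := by
      intro p r
      simp only [Matrix.add_apply, Matrix.smul_apply, smul_eq_mul]
      exact (((differentiableAt_fun_id.sub (differentiableAt_const _)).mul
        (differentiableAt_const _)).const_add _)
    -- differentiability of q entrywise
    have hqdiff : ∀ j : Fin n, DifferentiableAt ℝ (fun σ => q i σ j) s := by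
      intro j
      have hrw : (fun σ => q i σ j) = fun σ =>
          ((A + (σ - c) • D).det)⁻¹ * ((A + (σ - c) • D).adjugate *ᵥ (u + (σ - c) • w)) j := by
        funext σ
        rw [hkey σ, Matrix.inv_def]
        simp [Ring.inverse_eq_inv', smul_mulVec]
      rw [hrw]
      apply DifferentiableAt.mul
      · exact (aux_det_diff hMdiff).inv (hdet s hcs.le).ne_zero
      · have h2 : (fun σ => ((A + (σ - c) • D).adjugate *ᵥ (u + (σ - c) • w)) j)
            = fun σ => ∑ l, (A + (σ - c) • D).adjugate j l * (u + (σ - c) • w) l := by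
          funext σ; simp [Matrix.mulVec, dotProduct]
        rw [h2]
        apply DifferentiableAt.fun_sum
        intro l _
        apply DifferentiableAt.mul
        · have h3 : (fun σ => (A + (σ - c) • D).adjugate j l)
              = fun σ => ((A + (σ - c) • D).updateRow l (Pi.single j 1)).det := by
            funext σ; rw [Matrix.adjugate_apply]
          rw [h3]
          apply aux_det_diff
          intro p r
          by_cases hp : p = l
          · simp only [Matrix.updateRow_apply, hp, if_pos rfl]
            exact differentiableAt_const _
          · simp only [Matrix.updateRow_apply, if_neg hp]
            exact hMdiff p r
        · simp only [Pi.add_apply, Pi.smul_apply, smul_eq_mul]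
          exact (((differentiableAt_fun_id.sub (differentiableAt_const _)).mul
            (differentiableAt_const _)).const_add _)
    set d : Fin n → ℝ := fun j => deriv (fun σ => q i σ j) s with hd
    have hdq : ∀ j, HasDerivAt (fun σ => q i σ j) (d j) s := by
      intro j
      simp only [hd]
      exact (hqdiff j).hasDerivAt
    -- derivative of M(σ) *ᵥ q(σ)
    have hF : ∀ k' : Fin n, HasDerivAt (fun σ => ((A + (σ - c) • D) *ᵥ q i σ) k')
        ((D *ᵥ q i s) k' + ((A + (s - c) • D) *ᵥ d) k') s := by
      intro k'
      have h1 : (fun σ => ((A + (σ - c) • D) *ᵥ q i σ) k')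
          = fun σ => ∑ l, (A + (σ - c) • D) k' l * q i σ l := by
        funext σ; simp [Matrix.mulVec, dotProduct]
      have h2 : (D *ᵥ q i s) k' + ((A + (s - c) • D) *ᵥ d) k'
          = ∑ l, (D k' l * q i s l + (A + (s - c) • D) k' l * d l) := by
        simp [Matrix.mulVec, dotProduct, Finset.sum_add_distrib]
      rw [h1, h2]
      apply HasDerivAt.fun_sum
      intro l _
      have hm : HasDerivAt (fun σ => (A + (σ - c) • D) k' l) (D k' l) s := by
        simp only [Matrix.add_apply, Matrix.smul_apply, smul_eq_mul]
        have h4 : HasDerivAt (fun σ : ℝ => σ - c) 1 s := (hasDerivAt_id s).sub_const c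
        simpa using (h4.mul_const (D k' l)).const_add (A k' l)
      exact hm.mul (hdq l)
    have hvder : ∀ k' : Fin n, HasDerivAt (fun σ => (u + (σ - c) • w) k') (w k') s := by
      intro k'
      simp only [Pi.add_apply, Pi.smul_apply, smul_eq_mul]
      have h4 : HasDerivAt (fun σ : ℝ => σ - c) 1 s := (hasDerivAt_id s).sub_const c
      simpa using (h4.mul_const (w k')).const_add (u k')
    have hev : ∀ᶠ σ in nhds s, ((A + (σ - c) • D) *ᵥ q i σ) = (u + (σ - c) • w) := by
      filter_upwards [eventually_gt_nhds hcs] with σ hσ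
      rw [hkey σ, Matrix.mulVec_mulVec, Matrix.mul_nonsing_inv _ (hdet σ hσ.le),
        Matrix.one_mulVec]
    have heq : D *ᵥ q i s + (A + (s - c) • D) *ᵥ d = w := by
      funext k'
      have h' : (fun σ => (u + (σ - c) • w) k')
          =ᶠ[nhds s] (fun σ => ((A + (σ - c) • D) *ᵥ q i σ) k') :=
        hev.mono fun σ h => (congrFun h k').symm
      have h5 := ((hF k').congr_of_eventuallyEq h').unique (hvder k')
      simpa using h5
    have hdval : d = (A + (s - c) • D)⁻¹ *ᵥ (w - D *ᵥ q i s) := by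
      have h1 : (A + (s - c) • D) *ᵥ d = w - D *ᵥ q i s := by
        rw [← heq, add_sub_cancel_left]
      calc d = ((A + (s - c) • D)⁻¹ * (A + (s - c) • D)) *ᵥ d := by
              rw [Matrix.nonsing_inv_mul _ (hdet s hcs.le), Matrix.one_mulVec]
        _ = (A + (s - c) • D)⁻¹ *ᵥ ((A + (s - c) • D) *ᵥ d) := by
              rw [Matrix.mulVec_mulVec]
        _ = _ := by rw [h1]
    have hPs : P i s = (A + (s - c) • D)⁻¹ := by rw [hP i s, hA, hD, hc]
    have hfinal : -(P i s * (B i * (R i)⁻¹)) *ᵥ ((B i)ᵀ *ᵥ q i s - a i) = d := by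
      rw [hdval, Matrix.neg_mulVec, ← Matrix.mulVec_mulVec, Matrix.mulVec_sub,
        Matrix.mulVec_mulVec, ← hD, ← hw, hPs, ← Matrix.mulVec_neg, neg_sub]
    rw [hfinal]
    exact hdq k
  · have hdetQ : IsUnit Qf.det := isUnit_iff_ne_zero.mpr hQf.det_pos.ne'
    have h0 : Finset.Icc 1 0 = (∅ : Finset ℕ) := Finset.Icc_eq_empty (by norm_num)
    have hT0 : T 0 = 0 := by rw [hT 0, h0, Finset.sum_empty]
    rw [hq 1 0, hP 1 0]
    norm_num [h0, hT0]
    rw [Matrix.nonsing_inv_nonsing_inv _ hdetQ, Matrix.mul_nonsing_inv _ hdetQ,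
      Matrix.one_mulVec]
end

section
/- Let I ⊆ ℝ be an open interval, M ∈ ℝ^{n×n}, w ∈ ℝ^n, and let P : ℝ → ℝ^{n×n} and q : ℝ → ℝ^n be such that P(s) is invertible for every s ∈ I, P has derivative P′(s) = −P(s) M P(s) at every s ∈ I, and q has derivative q′(s) = −P(s) M q(s) + P(s) w at every s ∈ I. Then the function s ↦ P(s)^{−1} q(s) has constant derivative w at every s ∈ I. -/
open Matrix

lemma diffAt_det {m : ℕ} (A : ℝ → Matrix (Fin m) (Fin m) ℝ) (s : ℝ)
    (h : ∀ k l, DifferentiableAt ℝ (fun σ => A σ k l) s) :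
    DifferentiableAt ℝ (fun σ => (A σ).det) s := by
  simp only [Matrix.det_apply']
  apply DifferentiableAt.fun_sum
  intro p _
  apply DifferentiableAt.const_mul
  exact (HasFDerivAt.finset_prod (u := Finset.univ)
    (g := fun i σ => A σ (p i) i) (g' := fun i => fderiv ℝ (fun σ => A σ (p i) i) s)
    (fun i _ => (h (p i) i).hasFDerivAt)).differentiableAt

/-- Let `I ⊆ ℝ` be an open interval, `M ∈ ℝ^{n×n}`, `w ∈ ℝ^n`, and let
`P : ℝ → ℝ^{n×n}`, `q : ℝ → ℝ^n` be such that `P(s)` is invertible for every `s ∈ I`,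
`P′(s) = -P(s) M P(s)` and `q′(s) = -P(s) M q(s) + P(s) w` (entrywise derivatives) at every
`s ∈ I`. Then `s ↦ P(s)⁻¹ q(s)` has constant derivative `w` at every `s ∈ I`. -/
theorem stmt_4 (n : ℕ) (hn : 1 ≤ n)
    (I : Set ℝ) (hIopen : IsOpen I) (hIinterval : I.OrdConnected)
    (M : Matrix (Fin n) (Fin n) ℝ) (w : Fin n → ℝ)
    (P : ℝ → Matrix (Fin n) (Fin n) ℝ) (q : ℝ → (Fin n → ℝ))
    (hinv : ∀ s ∈ I, IsUnit (P s).det)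
    (hP : ∀ s ∈ I, ∀ k l : Fin n,
      HasDerivAt (fun σ => P σ k l) ((-(P s * M * P s)) k l) s)
    (hq : ∀ s ∈ I, ∀ k : Fin n,
      HasDerivAt (fun σ => q σ k) ((-(P s * M) *ᵥ q s + P s *ᵥ w) k) s) :
    ∀ s ∈ I, ∀ k : Fin n, HasDerivAt (fun σ => ((P σ)⁻¹ *ᵥ q σ) k) (w k) s := by
  intro s hs k
  have hPdiff : ∀ i j, DifferentiableAt ℝ (fun σ => P σ i j) s :=
    fun i j => (hP s hs i j).differentiableAt
  have hdet_ne : (P s).det ≠ 0 := (hinv s hs).ne_zero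
  -- each entry of the inverse is differentiable at s
  have hBdiff : ∀ i j, DifferentiableAt ℝ (fun σ => (P σ)⁻¹ i j) s := by
    intro i j
    have heq : (fun σ => (P σ)⁻¹ i j)
        = fun σ => ((P σ).det)⁻¹ * ((P σ).updateRow j (Pi.single i 1)).det := by
      funext σ
      rw [Matrix.inv_def, Matrix.smul_apply, Matrix.adjugate_apply, Ring.inverse_eq_inv',
        smul_eq_mul]
    rw [heq]
    refine ((diffAt_det P s hPdiff).inv hdet_ne).mul (diffAt_det _ s ?_)
    intro a b
    by_cases hab : a = j
    · simpa [Matrix.updateRow_apply, hab] using differentiableAt_const _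
    · simpa [Matrix.updateRow_apply, hab] using hPdiff a b
  set B : ℝ → Matrix (Fin n) (Fin n) ℝ := fun σ => (P σ)⁻¹ with hBdef
  set D : Matrix (Fin n) (Fin n) ℝ := Matrix.of fun i j => deriv (fun σ => B σ i j) s with hDdef
  have hDB : ∀ i j, HasDerivAt (fun σ => B σ i j) (D i j) s :=
    fun i j => (hBdiff i j).hasDerivAt
  have hPB : P s * B s = 1 := Matrix.mul_nonsing_inv _ (hinv s hs)
  have hBP : B s * P s = 1 := Matrix.nonsing_inv_mul _ (hinv s hs)
  -- derivative of entries of P * B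
  have hmul : ∀ i j,
      HasDerivAt (fun σ => (P σ * B σ) i j) ((-(P s * M * P s) * B s + P s * D) i j) s := by
    intro i j
    have h1 : HasDerivAt (fun σ => ∑ t, P σ i t * B σ t j)
        (∑ t, ((-(P s * M * P s)) i t * B s t j + P s i t * D t j)) s :=
      HasDerivAt.fun_sum fun t _ => (hP s hs i t).mul (hDB t j)
    have hfun : (fun σ => (P σ * B σ) i j) = fun σ => ∑ t, P σ i t * B σ t j := by
      funext σ; rw [Matrix.mul_apply]
    have hval : ((-(P s * M * P s) * B s + P s * D) i j)
        = ∑ t, ((-(P s * M * P s)) i t * B s t j + P s i t * D t j) := by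
      rw [Matrix.add_apply, Matrix.mul_apply, Matrix.mul_apply, Finset.sum_add_distrib]
    rw [hfun, hval]
    exact h1
  -- P * B is eventually the identity, hence its derivative is 0
  have hzero : -(P s * M * P s) * B s + P s * D = 0 := by
    ext i j
    have hev : (fun σ => (P σ * B σ) i j) =ᶠ[nhds s] fun _ => (1 : Matrix (Fin n) (Fin n) ℝ) i j := by
      filter_upwards [hIopen.mem_nhds hs] with σ hσ
      rw [Matrix.mul_nonsing_inv _ (hinv σ hσ)]
    have h0 : HasDerivAt (fun σ => (P σ * B σ) i j) 0 s :=
      (hasDerivAt_const s _).congr_of_eventuallyEq hev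
    have := (hmul i j).unique h0
    simpa using this
  -- deduce D = M
  have hD : D = M := by
    have h1 : P s * D = P s * M := by
      have h2 : P s * M * P s * B s = P s * D := by
        have h3 := hzero
        rwa [neg_mul, neg_add_eq_zero] at h3
      rw [← h2, Matrix.mul_assoc (P s * M) (P s) (B s), hPB, Matrix.mul_one]
    calc D = (B s * P s) * D := by rw [hBP, Matrix.one_mul]
    _ = B s * (P s * D) := by rw [Matrix.mul_assoc]
    _ = B s * (P s * M) := by rw [h1]
    _ = (B s * P s) * M := by rw [Matrix.mul_assoc]
    _ = M := by rw [hBP, Matrix.one_mul]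
  -- final computation
  have hfin : HasDerivAt (fun σ => ∑ j, B σ k j * q σ j)
      (∑ j, (D k j * q s j + B s k j * ((-(P s * M) *ᵥ q s + P s *ᵥ w) j))) s :=
    HasDerivAt.fun_sum fun j _ => (hDB k j).mul (hq s hs j)
  have hfun : (fun σ => ((P σ)⁻¹ *ᵥ q σ) k) = fun σ => ∑ j, B σ k j * q σ j := by
    funext σ; rw [Matrix.mulVec, dotProduct]
  have hval : (∑ j, (D k j * q s j + B s k j * ((-(P s * M) *ᵥ q s + P s *ᵥ w) j))) = w k := by
    have : (∑ j, (D k j * q s j + B s k j * ((-(P s * M) *ᵥ q s + P s *ᵥ w) j)))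
        = (D *ᵥ q s) k + (B s *ᵥ ((-(P s * M)) *ᵥ q s + P s *ᵥ w)) k := by
      rw [Finset.sum_add_distrib]; rfl
    rw [this, hD, Matrix.mulVec_add, Matrix.mulVec_mulVec, Matrix.mulVec_mulVec,
      Matrix.mul_neg, Matrix.neg_mulVec, ← Matrix.mul_assoc, hBP, Matrix.one_mul]
    simp [hPB, Matrix.one_mulVec]
  rw [hfun, ← hval]
  exact hfin
end

section
/- For every i ∈ {1, …, N}, the closed-form vector function q satisfies the recursive least squares update q(T_i) = q(T_{i−1}) + t_i P(T_i) B_i R_i^{−1} a_i − t_i P(T_{i−1}) B_i (R_i + t_i B_i^T P(T_{i−1}) B_i)^{−1} B_i^T q(T_{i−1}), where R_i + t_i B_i^T P(T_{i−1}) B_i is symmetric positive definite (hence invertible). -/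
open Matrix


lemma aux_smul_psd {k : ℕ} {c : ℝ} (hc : 0 ≤ c) {A : Matrix (Fin k) (Fin k) ℝ}
    (hA : A.PosSemidef) : (c • A).PosSemidef := by
  refine posSemidef_iff_dotProduct_mulVec.mpr ⟨?_, fun x => ?_⟩
  · unfold Matrix.IsHermitian
    have hAt : Aᵀ = A := by rw [← conjTranspose_eq_transpose_of_trivial, hA.1.eq]
    rw [conjTranspose_smul]
    simp [hA.1.eq, hAt]
  · rw [smul_mulVec, dotProduct_smul, smul_eq_mul]
    exact mul_nonneg hc (hA.dotProduct_mulVec_nonneg x)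

lemma aux_psd_conj {k l : ℕ} {A : Matrix (Fin k) (Fin k) ℝ} (hA : A.PosSemidef)
    (B : Matrix (Fin k) (Fin l) ℝ) : (Bᵀ * A * B).PosSemidef := by
  have := hA.conjTranspose_mul_mul_same B
  rwa [conjTranspose_eq_transpose_of_trivial] at this

lemma aux_psd_conj' {k l : ℕ} {A : Matrix (Fin k) (Fin k) ℝ} (hA : A.PosSemidef)
    (B : Matrix (Fin l) (Fin k) ℝ) : (B * A * Bᵀ).PosSemidef := by
  have := hA.mul_mul_conjTranspose_same B
  rwa [conjTranspose_eq_transpose_of_trivial] at this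

lemma aux_woodbury {n m : ℕ} {t : ℝ} (ht : 0 < t)
    {M : Matrix (Fin n) (Fin n) ℝ} (hM : M.PosDef)
    {R : Matrix (Fin m) (Fin m) ℝ} (hR : R.PosDef)
    (B : Matrix (Fin n) (Fin m) ℝ) :
    (R + t • (Bᵀ * M⁻¹ * B)).PosDef ∧
    (M + t • (B * R⁻¹ * Bᵀ))⁻¹
      = M⁻¹ - t • (M⁻¹ * B * (R + t • (Bᵀ * M⁻¹ * B))⁻¹ * Bᵀ * M⁻¹) := by
  have hMi : M⁻¹.PosDef := hM.inv
  have hS : (R + t • (Bᵀ * M⁻¹ * B)).PosDef :=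
    hR.add_posSemidef (aux_smul_psd ht.le (aux_psd_conj hMi.posSemidef B))
  refine ⟨hS, ?_⟩
  set S := R + t • (Bᵀ * M⁻¹ * B) with hSdef
  have hA : (M + t • (B * R⁻¹ * Bᵀ)).PosDef :=
    hM.add_posSemidef (aux_smul_psd ht.le (aux_psd_conj' hR.inv.posSemidef B))
  have hMinv : M * M⁻¹ = 1 := Matrix.mul_nonsing_inv _ ((Matrix.isUnit_iff_isUnit_det _).mp hM.isUnit)
  have hSinv : S * S⁻¹ = 1 := Matrix.mul_nonsing_inv _ ((Matrix.isUnit_iff_isUnit_det _).mp hS.isUnit)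
  have hRinv : R⁻¹ * R = 1 := Matrix.nonsing_inv_mul _ ((Matrix.isUnit_iff_isUnit_det _).mp hR.isUnit)
  have key : R⁻¹ = S⁻¹ + t • (R⁻¹ * (Bᵀ * M⁻¹ * B) * S⁻¹) := by
    have h1 : R⁻¹ * S * S⁻¹ = R⁻¹ := by rw [Matrix.mul_assoc, hSinv, Matrix.mul_one]
    calc R⁻¹ = R⁻¹ * S * S⁻¹ := h1.symm
      _ = (1 + t • (R⁻¹ * (Bᵀ * M⁻¹ * B))) * S⁻¹ := by
          rw [hSdef, Matrix.mul_add, Matrix.mul_smul, hRinv]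
      _ = S⁻¹ + t • (R⁻¹ * (Bᵀ * M⁻¹ * B) * S⁻¹) := by
          rw [Matrix.add_mul, Matrix.one_mul, Matrix.smul_mul]
  have hG : B * R⁻¹ * Bᵀ * M⁻¹
      = B * S⁻¹ * Bᵀ * M⁻¹ + t • (B * (R⁻¹ * (Bᵀ * M⁻¹ * B) * S⁻¹) * Bᵀ * M⁻¹) := by
    conv_lhs => rw [key]
    simp only [Matrix.mul_add, Matrix.add_mul, Matrix.mul_smul, Matrix.smul_mul]
  have hmain : (M + t • (B * R⁻¹ * Bᵀ)) * (M⁻¹ - t • (M⁻¹ * B * S⁻¹ * Bᵀ * M⁻¹)) = 1 := by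
    have h1 : M * (M⁻¹ * B * S⁻¹ * Bᵀ * M⁻¹) = B * S⁻¹ * Bᵀ * M⁻¹ := by
      simp only [← Matrix.mul_assoc]
      rw [hMinv, Matrix.one_mul]
    have h2 : (B * R⁻¹ * Bᵀ) * (M⁻¹ * B * S⁻¹ * Bᵀ * M⁻¹)
        = B * (R⁻¹ * (Bᵀ * M⁻¹ * B) * S⁻¹) * Bᵀ * M⁻¹ := by
      simp only [Matrix.mul_assoc]
    rw [Matrix.add_mul, Matrix.mul_sub, Matrix.mul_sub, hMinv, Matrix.mul_smul, Matrix.mul_smul,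
      Matrix.smul_mul, Matrix.smul_mul, h1, h2, smul_smul, hG]
    simp only [smul_add, smul_smul]
    abel
  exact Matrix.inv_eq_right_inv hmain


set_option maxHeartbeats 1000000 in
/-- For every `i ∈ {1, …, N}`, the closed-form vector function `q` satisfies the
recursive least squares update
`q(T_i) = q(T_{i-1}) + t_i P(T_i) B_i R_i⁻¹ a_i
  - t_i P(T_{i-1}) B_i (R_i + t_i B_iᵀ P(T_{i-1}) B_i)⁻¹ B_iᵀ q(T_{i-1})`,
where `R_i + t_i B_iᵀ P(T_{i-1}) B_i` is symmetric positive definite (hence invertible).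
Here `P i s`, `q i s` are the closed forms on the `i`-th piece. -/
theorem stmt_8 (n m N : ℕ) (hn : 1 ≤ n) (hm : 1 ≤ m) (hN : 1 ≤ N)
    (t : ℕ → ℝ) (ht : ∀ i ∈ Finset.Icc 1 N, 0 < t i)
    (B : ℕ → Matrix (Fin n) (Fin m) ℝ)
    (R : ℕ → Matrix (Fin m) (Fin m) ℝ) (hR : ∀ i ∈ Finset.Icc 1 N, (R i).PosDef)
    (a : ℕ → Fin m → ℝ)
    (Qf : Matrix (Fin n) (Fin n) ℝ) (hQf : Qf.PosDef) (b : Fin n → ℝ)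
    (T : ℕ → ℝ) (hT : ∀ i, T i = ∑ j ∈ Finset.Icc 1 i, t j)
    (P : ℕ → ℝ → Matrix (Fin n) (Fin n) ℝ)
    (hP : ∀ i s, P i s
      = (Qf⁻¹ + ∑ j ∈ Finset.Icc 1 (i - 1), t j • (B j * (R j)⁻¹ * (B j)ᵀ)
          + (s - T (i - 1)) • (B i * (R i)⁻¹ * (B i)ᵀ))⁻¹)
    (q : ℕ → ℝ → (Fin n → ℝ))
    (hq : ∀ i s, q i s
      = P i s *ᵥ (Qf⁻¹ *ᵥ b + ∑ j ∈ Finset.Icc 1 (i - 1), t j • ((B j * (R j)⁻¹) *ᵥ a j)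
          + (s - T (i - 1)) • ((B i * (R i)⁻¹) *ᵥ a i))) :
    ∀ i ∈ Finset.Icc 1 N,
      (R i + t i • ((B i)ᵀ * P i (T (i - 1)) * B i)).PosDef ∧
      q i (T i) = q i (T (i - 1))
        + t i • ((P i (T i) * (B i * (R i)⁻¹)) *ᵥ a i)
        - t i • ((P i (T (i - 1)) * B i
            * (R i + t i • ((B i)ᵀ * P i (T (i - 1)) * B i))⁻¹
            * (B i)ᵀ) *ᵥ q i (T (i - 1))) := by
  intro i hi
  obtain ⟨h1i, hiN⟩ := Finset.mem_Icc.mp hi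
  set M := Qf⁻¹ + ∑ j ∈ Finset.Icc 1 (i - 1), t j • (B j * (R j)⁻¹ * (B j)ᵀ) with hMdef
  have hsum : (∑ j ∈ Finset.Icc 1 (i - 1), t j • (B j * (R j)⁻¹ * (B j)ᵀ)).PosSemidef := by
    refine Finset.sum_induction _ Matrix.PosSemidef (fun A B' hA hB => hA.add hB) Matrix.PosSemidef.zero ?_
    intro j hj
    obtain ⟨hj1, hj2⟩ := Finset.mem_Icc.mp hj
    have hjN : j ∈ Finset.Icc 1 N := Finset.mem_Icc.mpr ⟨hj1, by omega⟩
    exact aux_smul_psd (ht j hjN).le (aux_psd_conj' (hR j hjN).inv.posSemidef (B j))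
  have hM : M.PosDef := hQf.inv.add_posSemidef hsum
  have hi1 : i - 1 + 1 = i := Nat.succ_pred_eq_of_pos h1i
  have hTi : T i = T (i - 1) + t i := by
    rw [hT, hT, ← hi1, Finset.sum_Icc_succ_top (by omega), hi1]
  have hPT0 : P i (T (i - 1)) = M⁻¹ := by
    rw [hP]; simp [hMdef]
  have hPT1 : P i (T i) = (M + t i • (B i * (R i)⁻¹ * (B i)ᵀ))⁻¹ := by
    rw [hP, hTi, add_sub_cancel_left, hMdef]
  obtain ⟨hSpos, hwood⟩ := aux_woodbury (ht i hi) hM (hR i hi) (B i)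
  rw [hPT0]
  refine ⟨hSpos, ?_⟩
  set S := R i + t i • ((B i)ᵀ * M⁻¹ * B i) with hSdef
  set c := Qf⁻¹ *ᵥ b + ∑ j ∈ Finset.Icc 1 (i - 1), t j • ((B j * (R j)⁻¹) *ᵥ a j) with hcdef
  have hq0 : q i (T (i - 1)) = M⁻¹ *ᵥ c := by
    rw [hq, hPT0]; simp [hcdef]
  have hq1 : q i (T i) = (M + t i • (B i * (R i)⁻¹ * (B i)ᵀ))⁻¹
      *ᵥ (c + t i • ((B i * (R i)⁻¹) *ᵥ a i)) := by
    rw [hq, hPT1, hTi, add_sub_cancel_left, hcdef]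
  rw [hq0, hq1, hPT1, hwood]
  simp only [Matrix.mulVec_add, Matrix.mulVec_smul, Matrix.sub_mulVec,
    Matrix.smul_mulVec, Matrix.mulVec_mulVec, Matrix.mul_assoc]
  abel
end

section
/- Suppose P : [0, ∞) → ℝ^{n×n}, q : [0, ∞) → ℝ^n, and c : [0, ∞) → ℝ are differentiable, P(t) is symmetric for every t, and they solve the Riccati ODE system: P′(t) = −P(t)^T C_pp P(t) + P(t)^T C_xp + C_xp^T P(t) + C_xx, q′(t) = −P(t)^T C_pp q(t) + C_xp^T q(t) − v_x + P(t)^T v_p, and c′(t) = −(1/2)⟨B^T q(t) − a_u, R^{−1}(B^T q(t) − a_u)⟩ for all t > 0, with P(0) = Q_f, q(0) = b, c(0) = 0. Define S(x, t) = (1/2)⟨x, P(t)x⟩ + ⟨q(t), x⟩ + c(t). Then for every x ∈ ℝ^n and t > 0, the gradient of S in x is ∇_x S(x, t) = P(t)x + q(t), the time derivative ∂S/∂t (x, t) satisfies ∂S/∂t (x, t) + H(x, P(t)x + q(t)) = 0, and S(x, 0) = (1/2)⟨x, Q_f x⟩ + ⟨b, x⟩, where H(x, p) = −⟨Ax, p⟩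 − (1/2)⟨x, Qx⟩ + ⟨a_x, x⟩ + (1/2)⟨B^T p + N^T x − a_u, R^{−1}(B^T p + N^T x − a_u)⟩. In other words, S solves the Hamilton–Jacobi PDE ∂S/∂t + H(x, ∇_x S) = 0 with initial data (1/2)⟨x, Q_f x⟩ + ⟨b, x⟩. -/
open Matrix

lemma dmove {k l : ℕ} (M : Matrix (Fin k) (Fin l) ℝ) (v : Fin k → ℝ) (w : Fin l → ℝ) :
    v ⬝ᵥ (M *ᵥ w) = (Mᵀ *ᵥ v) ⬝ᵥ w := by
  rw [Matrix.dotProduct_mulVec, ← Matrix.mulVec_transpose]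

lemma riccati_scalar (n m : ℕ) (A : Matrix (Fin n) (Fin n) ℝ) (B Nmat : Matrix (Fin n) (Fin m) ℝ)
    (Q : Matrix (Fin n) (Fin n) ℝ) (Ri : Matrix (Fin m) (Fin m) ℝ) (hRi : Riᵀ = Ri)
    (au : Fin m → ℝ) (ax : Fin n → ℝ) (P : Matrix (Fin n) (Fin n) ℝ) (hP : Pᵀ = P)
    (q x : Fin n → ℝ) :
    (1/2) * (x ⬝ᵥ ((-(Pᵀ * (B * Ri * Bᵀ) * P) + Pᵀ * (A - B * Ri * Nmatᵀ)
        + (A - B * Ri * Nmatᵀ)ᵀ * P + (Q - Nmat * Ri * Nmatᵀ)) *ᵥ x))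
      + (-((Pᵀ * (B * Ri * Bᵀ)) *ᵥ q) + (A - B * Ri * Nmatᵀ)ᵀ *ᵥ q
          - (ax - Nmat *ᵥ (Ri *ᵥ au)) + Pᵀ *ᵥ (B *ᵥ (Ri *ᵥ au))) ⬝ᵥ x
      + (-(1/2) * ((Bᵀ *ᵥ q - au) ⬝ᵥ (Ri *ᵥ (Bᵀ *ᵥ q - au))))
    = -(-((A *ᵥ x) ⬝ᵥ (P *ᵥ x + q)) - (1/2) * (x ⬝ᵥ (Q *ᵥ x)) + ax ⬝ᵥ x
        + (1/2) * ((Bᵀ *ᵥ (P *ᵥ x + q) + Nmatᵀ *ᵥ x - au)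
            ⬝ᵥ (Ri *ᵥ (Bᵀ *ᵥ (P *ᵥ x + q) + Nmatᵀ *ᵥ x - au)))) := by
  have dsym : ∀ (u v : Fin m → ℝ), u ⬝ᵥ (Ri *ᵥ v) = v ⬝ᵥ (Ri *ᵥ u) := fun u v => by
    rw [dmove, hRi, dotProduct_comm]
  have a1 : x ⬝ᵥ P *ᵥ B *ᵥ Ri *ᵥ Bᵀ *ᵥ P *ᵥ x = Bᵀ *ᵥ P *ᵥ x ⬝ᵥ Ri *ᵥ Bᵀ *ᵥ P *ᵥ x := by
    simp [dmove, hP, Matrix.mul_assoc]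
  have a2 : x ⬝ᵥ P *ᵥ A *ᵥ x = A *ᵥ x ⬝ᵥ P *ᵥ x := by
    rw [dmove, hP]; exact dotProduct_comm _ _
  have a3 : x ⬝ᵥ P *ᵥ B *ᵥ Ri *ᵥ Nmatᵀ *ᵥ x = Bᵀ *ᵥ P *ᵥ x ⬝ᵥ Ri *ᵥ Nmatᵀ *ᵥ x := by
    simp [dmove, hP, Matrix.mul_assoc]
  have a4 : x ⬝ᵥ Aᵀ *ᵥ P *ᵥ x = A *ᵥ x ⬝ᵥ P *ᵥ x := by
    rw [dmove, Matrix.transpose_transpose]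
  have a5 : x ⬝ᵥ Nmat *ᵥ Ri *ᵥ Bᵀ *ᵥ P *ᵥ x = Nmatᵀ *ᵥ x ⬝ᵥ Ri *ᵥ Bᵀ *ᵥ P *ᵥ x := by
    simp [dmove, hP, Matrix.mul_assoc]
  have a6 : x ⬝ᵥ Nmat *ᵥ Ri *ᵥ Nmatᵀ *ᵥ x = Nmatᵀ *ᵥ x ⬝ᵥ Ri *ᵥ Nmatᵀ *ᵥ x := by
    simp [dmove, Matrix.mul_assoc]
  have a7 : P *ᵥ B *ᵥ Ri *ᵥ Bᵀ *ᵥ q ⬝ᵥ x = Bᵀ *ᵥ P *ᵥ x ⬝ᵥ Ri *ᵥ Bᵀ *ᵥ q := by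
    rw [dotProduct_comm]; simp [dmove, hP, Matrix.mul_assoc]
  have a8 : Aᵀ *ᵥ q ⬝ᵥ x = A *ᵥ x ⬝ᵥ q := by
    rw [dotProduct_comm, dmove, Matrix.transpose_transpose]
  have a9 : Nmat *ᵥ Ri *ᵥ Bᵀ *ᵥ q ⬝ᵥ x = Nmatᵀ *ᵥ x ⬝ᵥ Ri *ᵥ Bᵀ *ᵥ q := by
    rw [dotProduct_comm]; simp [dmove, Matrix.mul_assoc]
  have a10 : Nmat *ᵥ Ri *ᵥ au ⬝ᵥ x = Nmatᵀ *ᵥ x ⬝ᵥ Ri *ᵥ au := by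
    rw [dotProduct_comm]; simp [dmove, Matrix.mul_assoc]
  have a11 : P *ᵥ B *ᵥ Ri *ᵥ au ⬝ᵥ x = Bᵀ *ᵥ P *ᵥ x ⬝ᵥ Ri *ᵥ au := by
    rw [dotProduct_comm]; simp [dmove, hP, Matrix.mul_assoc]
  have b1 := dsym (Bᵀ *ᵥ q) (Bᵀ *ᵥ P *ᵥ x)
  have b2 := dsym (Bᵀ *ᵥ q) (Nmatᵀ *ᵥ x)
  have b3 := dsym au (Bᵀ *ᵥ P *ᵥ x)
  have b4 := dsym au (Nmatᵀ *ᵥ x)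
  have b5 := dsym au (Bᵀ *ᵥ q)
  simp only [hP, Matrix.transpose_sub, Matrix.transpose_mul, Matrix.transpose_transpose, hRi,
    Matrix.add_mulVec, Matrix.sub_mulVec, Matrix.neg_mulVec, ← Matrix.mulVec_mulVec,
    Matrix.mulVec_add, Matrix.mulVec_sub, Matrix.mulVec_neg,
    dotProduct_add, dotProduct_sub, dotProduct_neg,
    add_dotProduct, sub_dotProduct, neg_dotProduct]
  linarith [a1, a2, a3, a4, a5, a6, a7, a8, a9, a10, a11, b1, b2, b3, b4, b5]

lemma grad_quad (n : ℕ) (M : Matrix (Fin n) (Fin n) ℝ) (hM : M.IsSymm)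
    (qv : Fin n → ℝ) (cv : ℝ) (x : EuclideanSpace ℝ (Fin n)) :
    HasGradientAt (fun y : EuclideanSpace ℝ (Fin n) =>
        (1 / 2) * ((y : Fin n → ℝ) ⬝ᵥ (M *ᵥ y)) + qv ⬝ᵥ y + cv)
      (WithLp.toLp 2 (M *ᵥ x + qv : Fin n → ℝ) : EuclideanSpace ℝ (Fin n)) x := by
  rw [hasGradientAt_iff_hasFDerivAt]
  have hproj : ∀ k : Fin n, HasFDerivAt (fun y : EuclideanSpace ℝ (Fin n) => y k)
      (EuclideanSpace.proj k) x := fun k =>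
    (EuclideanSpace.proj (𝕜 := ℝ) k).hasFDerivAt.congr_fderiv rfl
  have hterm : ∀ k l : Fin n, HasFDerivAt
      (fun y : EuclideanSpace ℝ (Fin n) => y k * (M k l * y l))
      (x k • (M k l • (EuclideanSpace.proj l : EuclideanSpace ℝ (Fin n) →L[ℝ] ℝ))
        + (M k l * x l) • (EuclideanSpace.proj k : EuclideanSpace ℝ (Fin n) →L[ℝ] ℝ)) x :=
    fun k l => (hproj k).mul ((hproj l).const_mul (M k l))
  have hquad : HasFDerivAt (fun y : EuclideanSpace ℝ (Fin n) => (y : Fin n → ℝ) ⬝ᵥ (M *ᵥ y))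
      (∑ k, ∑ l, (x k • (M k l • (EuclideanSpace.proj l : EuclideanSpace ℝ (Fin n) →L[ℝ] ℝ))
        + (M k l * x l) • (EuclideanSpace.proj k : EuclideanSpace ℝ (Fin n) →L[ℝ] ℝ))) x := by
    have : (fun y : EuclideanSpace ℝ (Fin n) => (y : Fin n → ℝ) ⬝ᵥ (M *ᵥ y))
        = fun y : EuclideanSpace ℝ (Fin n) => ∑ k, ∑ l, y k * (M k l * y l) := by
      funext y; simp [dotProduct, mulVec, Finset.mul_sum]
    rw [this]
    exact HasFDerivAt.fun_sum fun k _ => HasFDerivAt.fun_sum fun l _ => hterm k l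
  have hlin : HasFDerivAt (fun y : EuclideanSpace ℝ (Fin n) => qv ⬝ᵥ y)
      (∑ k, qv k • (EuclideanSpace.proj k : EuclideanSpace ℝ (Fin n) →L[ℝ] ℝ)) x := by
    have : (fun y : EuclideanSpace ℝ (Fin n) => qv ⬝ᵥ (y : Fin n → ℝ))
        = fun y : EuclideanSpace ℝ (Fin n) => ∑ k, qv k * y k := by
      funext y; simp [dotProduct]
    rw [this]
    exact HasFDerivAt.fun_sum fun k _ => (hproj k).const_mul (qv k)
  have htot := ((hquad.const_mul (1/2)).add hlin).add_const cv
  refine htot.congr_fderiv (Eq.symm ?_)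
  refine ContinuousLinearMap.ext fun h => ?_
  simp only [InnerProductSpace.toDual_apply_apply, ContinuousLinearMap.add_apply,
    ContinuousLinearMap.smul_apply, ContinuousLinearMap.sum_apply,
    ContinuousLinearMap.coe_smul', Pi.smul_apply, PiLp.proj_apply,
    smul_eq_mul, PiLp.inner_apply, RCLike.inner_apply, conj_trivial]
  have hMsymm : ∀ k l, M l k = M k l := fun k l => by
    conv_lhs => rw [← hM]
    rfl
  have h1 : ∑ k, ∑ i, x k * (M k i * h i) = ∑ k, ∑ i, M k i * x i * h k := by
    rw [Finset.sum_comm]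
    exact Finset.sum_congr rfl fun k _ => Finset.sum_congr rfl fun i _ => by
      rw [hMsymm i k]; ring
  have e1 : ∑ k, ∑ i, (x k * (M k i * h i) + M k i * x i * h k)
      = (∑ k, ∑ i, x k * (M k i * h i)) + ∑ k, ∑ i, M k i * x i * h k := by
    simp [Finset.sum_add_distrib]
  rw [e1, h1, ← two_mul, ← mul_assoc]
  norm_num
  simp [Matrix.mulVec, dotProduct, add_mul, Finset.sum_add_distrib, Finset.sum_mul]
  simp only [mul_add, Finset.sum_add_distrib, Finset.mul_sum]
  congr 1
  · exact Finset.sum_congr rfl fun i _ => Finset.sum_congr rfl fun j _ => by ring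
  · exact Finset.sum_congr rfl fun i _ => by ring

/-- Suppose `P`, `q`, `c` solve the Riccati ODE system (entrywise derivatives)
`P′ = -Pᵀ C_pp P + Pᵀ C_xp + C_xpᵀ P + C_xx`,
`q′ = -Pᵀ C_pp q + C_xpᵀ q - v_x + Pᵀ v_p`,
`c′(t) = -(1/2)⟨Bᵀ q(t) - a_u, R⁻¹(Bᵀ q(t) - a_u)⟩` for `t > 0`, with `P(0) = Q_f`,
`q(0) = b`, `c(0) = 0`, where `C_pp = B R⁻¹ Bᵀ`, `C_xx = Q - N R⁻¹ Nᵀ`,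
`C_xp = A - B R⁻¹ Nᵀ`, `v_x = a_x - N R⁻¹ a_u`, `v_p = B R⁻¹ a_u`, and `P(t)` is symmetric.
Define `S(x, t) = (1/2)⟨x, P(t)x⟩ + ⟨q(t), x⟩ + c(t)`. Then for every `x` and `t > 0`:
`∇ₓ S(x, t) = P(t)x + q(t)`, `∂S/∂t(x, t) + H(x, P(t)x + q(t)) = 0`, and
`S(x, 0) = (1/2)⟨x, Q_f x⟩ + ⟨b, x⟩`; i.e. `S` solves the HJ PDE `∂S/∂t + H(x, ∇ₓS) = 0`. -/
theorem stmt_16 (n m : ℕ) (hn : 1 ≤ n) (hm : 1 ≤ m)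
    (A : Matrix (Fin n) (Fin n) ℝ) (B : Matrix (Fin n) (Fin m) ℝ)
    (Nmat : Matrix (Fin n) (Fin m) ℝ)
    (Q Qf : Matrix (Fin n) (Fin n) ℝ) (hQ : Q.IsSymm) (hQf : Qf.IsSymm)
    (R : Matrix (Fin m) (Fin m) ℝ) (hR : R.PosDef)
    (au : Fin m → ℝ) (ax b : Fin n → ℝ)
    (P : ℝ → Matrix (Fin n) (Fin n) ℝ) (q : ℝ → (Fin n → ℝ)) (c : ℝ → ℝ)
    (hPsymm : ∀ t, (P t).IsSymm)
    (hP : ∀ t > (0 : ℝ), ∀ k l : Fin n, HasDerivAt (fun τ => P τ k l)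
      ((-((P t)ᵀ * (B * R⁻¹ * Bᵀ) * P t) + (P t)ᵀ * (A - B * R⁻¹ * Nmatᵀ)
        + (A - B * R⁻¹ * Nmatᵀ)ᵀ * P t + (Q - Nmat * R⁻¹ * Nmatᵀ)) k l) t)
    (hq : ∀ t > (0 : ℝ), ∀ k : Fin n, HasDerivAt (fun τ => q τ k)
      ((-(((P t)ᵀ * (B * R⁻¹ * Bᵀ)) *ᵥ q t) + (A - B * R⁻¹ * Nmatᵀ)ᵀ *ᵥ q t
        - (ax - Nmat *ᵥ (R⁻¹ *ᵥ au)) + (P t)ᵀ *ᵥ (B *ᵥ (R⁻¹ *ᵥ au))) k) t)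
    (hc : ∀ t > (0 : ℝ), HasDerivAt c
      (-(1 / 2) * ((Bᵀ *ᵥ q t - au) ⬝ᵥ (R⁻¹ *ᵥ (Bᵀ *ᵥ q t - au)))) t)
    (hP0 : P 0 = Qf) (hq0 : q 0 = b) (hc0 : c 0 = 0)
    (S : EuclideanSpace ℝ (Fin n) → ℝ → ℝ)
    (hS : ∀ (x : EuclideanSpace ℝ (Fin n)) (t : ℝ),
      S x t = (1 / 2) * ((x : Fin n → ℝ) ⬝ᵥ (P t *ᵥ x)) + q t ⬝ᵥ x + c t)
    (H : (Fin n → ℝ) → (Fin n → ℝ) → ℝ)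
    (hH : ∀ x p, H x p = -((A *ᵥ x) ⬝ᵥ p) - (1 / 2) * (x ⬝ᵥ (Q *ᵥ x)) + ax ⬝ᵥ x
      + (1 / 2) * ((Bᵀ *ᵥ p + Nmatᵀ *ᵥ x - au)
          ⬝ᵥ (R⁻¹ *ᵥ (Bᵀ *ᵥ p + Nmatᵀ *ᵥ x - au)))) :
    ∀ (x : EuclideanSpace ℝ (Fin n)) (t : ℝ), 0 < t →
      HasGradientAt (fun y => S y t)
        (WithLp.toLp 2 (P t *ᵥ x + q t : Fin n → ℝ) : EuclideanSpace ℝ (Fin n)) x ∧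
      HasDerivAt (fun τ => S x τ) (-H (x : Fin n → ℝ) (P t *ᵥ x + q t)) t ∧
      S x 0 = (1 / 2) * ((x : Fin n → ℝ) ⬝ᵥ (Qf *ᵥ x)) + b ⬝ᵥ x := by
  intro x t ht
  have hRi : (R⁻¹)ᵀ = R⁻¹ := by
    rw [Matrix.transpose_nonsing_inv]
    congr 1
    have := hR.isHermitian
    simpa [Matrix.IsHermitian, Matrix.conjTranspose_eq_transpose_of_trivial] using this
  refine ⟨?_, ?_, ?_⟩
  · have : (fun y : EuclideanSpace ℝ (Fin n) => S y t)
        = fun y : EuclideanSpace ℝ (Fin n) =>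
            (1 / 2) * ((y : Fin n → ℝ) ⬝ᵥ (P t *ᵥ y)) + q t ⬝ᵥ y + c t :=
      funext fun y => hS y t
    rw [this]
    exact grad_quad n (P t) (hPsymm t) (q t) (c t) x
  · have hfun : (fun τ => S x τ)
        = fun τ => (1 / 2) * ((x : Fin n → ℝ) ⬝ᵥ (P τ *ᵥ x)) + q τ ⬝ᵥ x + c τ :=
      funext fun τ => hS x τ
    rw [hfun]
    have e : ∀ (M : Matrix (Fin n) (Fin n) ℝ),
        (x : Fin n → ℝ) ⬝ᵥ (M *ᵥ x) = ∑ k, ∑ l, (x : Fin n → ℝ) k * (M k l * (x : Fin n → ℝ) l) :=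
      fun M => by simp [dotProduct, mulVec, Finset.mul_sum]
    have h1 : HasDerivAt (fun τ => (x : Fin n → ℝ) ⬝ᵥ (P τ *ᵥ x))
        ((x : Fin n → ℝ) ⬝ᵥ ((-((P t)ᵀ * (B * R⁻¹ * Bᵀ) * P t) + (P t)ᵀ * (A - B * R⁻¹ * Nmatᵀ)
          + (A - B * R⁻¹ * Nmatᵀ)ᵀ * P t + (Q - Nmat * R⁻¹ * Nmatᵀ)) *ᵥ x)) t := by
      simp only [e]
      exact HasDerivAt.fun_sum fun k _ => HasDerivAt.fun_sum fun l _ =>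
        ((hP t ht k l).mul_const _).const_mul _
    have h2 : HasDerivAt (fun τ => q τ ⬝ᵥ (x : Fin n → ℝ))
        ((-(((P t)ᵀ * (B * R⁻¹ * Bᵀ)) *ᵥ q t) + (A - B * R⁻¹ * Nmatᵀ)ᵀ *ᵥ q t
          - (ax - Nmat *ᵥ (R⁻¹ *ᵥ au)) + (P t)ᵀ *ᵥ (B *ᵥ (R⁻¹ *ᵥ au))) ⬝ᵥ (x : Fin n → ℝ)) t := by
      simp only [dotProduct]
      exact HasDerivAt.fun_sum fun k _ => (hq t ht k).mul_const _
    have htot := ((h1.const_mul (1/2 : ℝ)).add h2).add (hc t ht)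
    refine htot.congr_deriv (Eq.symm ?_)
    rw [hH]
    exact (riccati_scalar n m A B Nmat Q R⁻¹ hRi au ax (P t) (hPsymm t) (q t) x).symm
  · rw [hS x 0, hP0, hq0, hc0, add_zero]
end
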